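/- arXiv:1304.3519 — 7 statements merged into one kernel-verified Lean document; each statement's English description precedes it below -/
import Mathlib

section
/- (Principle 1 / Theorem 2.) Let α > 1, μ > 0, C > 0 be real numbers and let σ be a real number with σ ≥ μ(α−1)·C^α. Then for all real w₁, w₂, w₃, w₄ ≥ 0 with w₁ + w₂ + w₃ + w₄ ≤ C, one has 2σ + μ·(w₁+w₂+w₃)^α + μ·(w₂+w₃+w₄)^α ≥ σ + μ·(w₁+w₂+w₃+w₄)^α. That is, consolidating all VMs behind a single ToR switch (power σ + μ·(w₁+w₂+w₃+w₄)^α) never consumes more ToR-switch power than splitting them across two ToR switches (power 2σ + μ·(w₁+w₂+w₃)^α + μ·(w₂+w₃+w₄)^α). -/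
/-- Tangent line inequality for `x ↦ x ^ α` at `c > 0`. -/
lemma rpow_tangent {α c x : ℝ} (hα : 1 ≤ α) (hc : 0 < c) (hx : 0 ≤ x) :
    c ^ α + α * c ^ (α - 1) * (x - c) ≤ x ^ α := by
  have hs : (-1 : ℝ) ≤ x / c - 1 := by
    have : 0 ≤ x / c := div_nonneg hx hc.le
    linarith
  have h := one_add_mul_self_le_rpow_one_add hs hα
  have h1 : (1 : ℝ) + (x / c - 1) = x / c := by ring
  rw [h1, Real.div_rpow hx hc.le] at h
  have hcα : (0 : ℝ) < c ^ α := Real.rpow_pos_of_pos hc α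
  have h2 := mul_le_mul_of_nonneg_right h hcα.le
  rw [div_mul_cancel₀ _ (ne_of_gt hcα)] at h2
  have hkey : c ^ (α - 1) * c = c ^ α := by
    rw [← Real.rpow_add_one (ne_of_gt hc), sub_add_cancel]
  calc c ^ α + α * c ^ (α - 1) * (x - c)
      = c ^ α + α * (c ^ (α - 1) * x) - α * (c ^ (α - 1) * c) := by ring
    _ = c ^ α + α * (c ^ (α - 1) * x) - α * c ^ α := by rw [hkey]
    _ ≤ x ^ α := by
        have hx' : c ^ (α - 1) * x = x / c * c ^ α := by
          rw [← hkey]; field_simp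
        rw [hx']
        linarith [h2]

/-- Principle 1 (Theorem 2): consolidating all VMs behind a single ToR switch never
consumes more ToR-switch power than splitting them across two ToR switches. -/
theorem principle1_compact_into_racks
    (α μ C σ : ℝ) (hα : 1 < α) (hμ : 0 < μ) (hC : 0 < C)
    (hσ : σ ≥ μ * (α - 1) * C ^ α) :
    ∀ w₁ w₂ w₃ w₄ : ℝ, 0 ≤ w₁ → 0 ≤ w₂ → 0 ≤ w₃ → 0 ≤ w₄ →
      w₁ + w₂ + w₃ + w₄ ≤ C →
      2 * σ + μ * (w₁ + w₂ + w₃) ^ α + μ * (w₂ + w₃ + w₄) ^ α ≥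
        σ + μ * (w₁ + w₂ + w₃ + w₄) ^ α := by
  intro w₁ w₂ w₃ w₄ h1 h2 h3 h4 hsum
  set a := w₁ + w₂ + w₃ with ha
  set b := w₂ + w₃ + w₄ with hb
  set s := w₁ + w₂ + w₃ + w₄ with hs
  have ha0 : 0 ≤ a := by positivity
  have hb0 : 0 ≤ b := by positivity
  have hs0 : 0 ≤ s := by positivity
  have hα1 : (1 : ℝ) ≤ α := hα.le
  -- Step 1: s^α ≤ a^α + α * C^(α-1) * w₄
  have hsC : s ≤ C := hsum
  have step1 : s ^ α ≤ a ^ α + α * C ^ (α - 1) * w₄ := by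
    rcases eq_or_lt_of_le hs0 with h0 | hspos
    · -- s = 0, so a = 0, w₄ = 0
      have hs' : s = 0 := h0.symm
      have ha' : a = 0 := by simp [ha, hs] at hs' ⊢; linarith
      have hw4 : w₄ = 0 := by simp [hs] at hs'; linarith
      rw [hs', ha', hw4]
      simp [Real.zero_rpow (by positivity : α ≠ 0)]
    · -- tangent at s evaluated at a: a^α ≥ s^α + α s^(α-1) (a - s)
      have ht := rpow_tangent hα1 hspos ha0 (α := α) (x := a)
      have hsa : s - a = w₄ := by rw [hs, ha]; ring
      have hmono : s ^ (α - 1) ≤ C ^ (α - 1) :=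
        Real.rpow_le_rpow hs0 hsC (by linarith)
      have hrw : α * s ^ (α - 1) * (a - s) = -(α * s ^ (α - 1) * w₄) := by
        rw [← hsa]; ring
      rw [hrw] at ht
      have hmul : α * s ^ (α - 1) * w₄ ≤ α * C ^ (α - 1) * w₄ :=
        mul_le_mul_of_nonneg_right
          (mul_le_mul_of_nonneg_left hmono (by linarith)) h4
      linarith
  -- Step 2: α * C^(α-1) * w₄ ≤ w₄^α + (α-1) * C^α  (tangent at C)
  have step2 : α * C ^ (α - 1) * w₄ ≤ w₄ ^ α + (α - 1) * C ^ α := by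
    have ht := rpow_tangent hα1 hC h4 (α := α) (x := w₄)
    have hCk : C ^ (α - 1) * C = C ^ α := by
      rw [← Real.rpow_add_one (ne_of_gt hC), sub_add_cancel]
    have hCk' : α * (C ^ (α - 1) * C) = α * C ^ α := by rw [hCk]
    nlinarith [ht, hCk']
  -- Step 3: w₄^α ≤ b^α
  have step3 : w₄ ^ α ≤ b ^ α :=
    Real.rpow_le_rpow h4 (by rw [hb]; linarith) (by linarith)
  have key : μ * s ^ α ≤ μ * a ^ α + μ * b ^ α + σ := by
    have : s ^ α ≤ a ^ α + b ^ α + (α - 1) * C ^ α := by linarith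
    nlinarith
  linarith
end

section
/- Let α be a real number with 1 < α ≤ 2 and let w₁, w₄ ≥ 0 be reals. Define f(w₂, w₃) = (w₁+w₂+w₃)^α + (w₂+w₃+w₄)^α − (w₁+w₂+w₃+w₄)^α. Then f is monotonically nondecreasing in each argument on the nonnegative quadrant: for all reals with 0 ≤ w₂ ≤ w₂′ and 0 ≤ w₃ ≤ w₃′, one has f(w₂, w₃) ≤ f(w₂′, w₃′). -/
open Real

lemma real_rpow_add_le_add_rpow {p a b : ℝ} (ha : 0 ≤ a) (hb : 0 ≤ b)
    (hp : 0 ≤ p) (hp1 : p ≤ 1) : (a + b) ^ p ≤ a ^ p + b ^ p := by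
  have := NNReal.rpow_add_le_add_rpow (a.toNNReal) (b.toNNReal) hp hp1
  have h := NNReal.coe_le_coe.2 this
  push_cast at h
  rwa [Real.coe_toNNReal _ ha, Real.coe_toNNReal _ hb] at h

lemma g_mono (α : ℝ) (hα1 : 1 < α) (hα2 : α ≤ 2) (a b : ℝ) (ha : 0 ≤ a) (hb : 0 ≤ b) :
    MonotoneOn (fun s : ℝ => (a + s) ^ α + (s + b) ^ α - (a + s + b) ^ α) (Set.Ici 0) := by
  have hα1' : 1 ≤ α := le_of_lt hα1
  have hder : ∀ s : ℝ, HasDerivAt (fun s : ℝ => (a + s) ^ α + (s + b) ^ α - (a + s + b) ^ α)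
      (α * (a + s) ^ (α - 1) + α * (s + b) ^ (α - 1) - α * (a + s + b) ^ (α - 1)) s := by
    intro s
    have h1 : HasDerivAt (fun s : ℝ => (a + s) ^ α) (α * (a + s) ^ (α - 1)) s := by
      have := (Real.hasDerivAt_rpow_const (x := a + s) (p := α) (Or.inr hα1')).comp s
        ((hasDerivAt_id s).const_add a)
      simpa [Function.comp_def] using this
    have h2 : HasDerivAt (fun s : ℝ => (s + b) ^ α) (α * (s + b) ^ (α - 1)) s := by
      have := (Real.hasDerivAt_rpow_const (x := s + b) (p := α) (Or.inr hα1')).comp s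
        ((hasDerivAt_id s).add_const b)
      simpa [Function.comp_def] using this
    have h3 : HasDerivAt (fun s : ℝ => (a + s + b) ^ α) (α * (a + s + b) ^ (α - 1)) s := by
      have := (Real.hasDerivAt_rpow_const (x := a + s + b) (p := α) (Or.inr hα1')).comp s
        (((hasDerivAt_id s).const_add a).add_const b)
      simpa [Function.comp_def] using this
    exact (h1.add h2).sub h3
  have hdiff : Differentiable ℝ (fun s : ℝ => (a + s) ^ α + (s + b) ^ α - (a + s + b) ^ α) :=
    fun s => (hder s).differentiableAt
  apply monotoneOn_of_deriv_nonneg (convex_Ici 0) hdiff.continuous.continuousOn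
    (hdiff.differentiableOn)
  intro s hs
  rw [(hder s).deriv]
  have hs0 : (0:ℝ) ≤ s := le_of_lt (by simpa using hs)
  have key : (a + s + b) ^ (α - 1) ≤ (a + s) ^ (α - 1) + (s + b) ^ (α - 1) := by
    have h := real_rpow_add_le_add_rpow (p := α - 1) (a := a + s) (b := b) (by linarith) hb
      (by linarith) (by linarith)
    calc (a + s + b) ^ (α - 1) ≤ (a + s) ^ (α - 1) + b ^ (α - 1) := h
      _ ≤ (a + s) ^ (α - 1) + (s + b) ^ (α - 1) := by
          gcongr
          · linarith
  nlinarith [Real.rpow_nonneg (by linarith : (0:ℝ) ≤ a + s + b) (α - 1)]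

/-- For `1 < α ≤ 2` and `w₁, w₄ ≥ 0`, the function
`f(w₂,w₃) = (w₁+w₂+w₃)^α + (w₂+w₃+w₄)^α − (w₁+w₂+w₃+w₄)^α`
is monotonically nondecreasing in each argument on the nonnegative quadrant. -/
theorem f_monotone_in_w2_w3
    (α : ℝ) (hα1 : 1 < α) (hα2 : α ≤ 2)
    (w₁ w₄ : ℝ) (hw₁ : 0 ≤ w₁) (hw₄ : 0 ≤ w₄) :
    ∀ w₂ w₂' w₃ w₃' : ℝ, 0 ≤ w₂ → w₂ ≤ w₂' → 0 ≤ w₃ → w₃ ≤ w₃' →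
      (w₁ + w₂ + w₃) ^ α + (w₂ + w₃ + w₄) ^ α - (w₁ + w₂ + w₃ + w₄) ^ α ≤
        (w₁ + w₂' + w₃') ^ α + (w₂' + w₃' + w₄) ^ α - (w₁ + w₂' + w₃' + w₄) ^ α := by
  intro w₂ w₂' w₃ w₃' h2 h2' h3 h3'
  have := g_mono α hα1 hα2 w₁ w₄ hw₁ hw₄
    (Set.mem_Ici.2 (by linarith : (0:ℝ) ≤ w₂ + w₃))
    (Set.mem_Ici.2 (by linarith : (0:ℝ) ≤ w₂' + w₃'))
    (by linarith : w₂ + w₃ ≤ w₂' + w₃')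
  simp only at this
  calc (w₁ + w₂ + w₃) ^ α + (w₂ + w₃ + w₄) ^ α - (w₁ + w₂ + w₃ + w₄) ^ α
      = (w₁ + (w₂ + w₃)) ^ α + ((w₂ + w₃) + w₄) ^ α - (w₁ + (w₂ + w₃) + w₄) ^ α := by
        ring_nf
    _ ≤ (w₁ + (w₂' + w₃')) ^ α + ((w₂' + w₃') + w₄) ^ α - (w₁ + (w₂' + w₃') + w₄) ^ α := this
    _ = (w₁ + w₂' + w₃') ^ α + (w₂' + w₃' + w₄) ^ α - (w₁ + w₂' + w₃' + w₄) ^ α := by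
        ring_nf
end

section
/- Let α > 1 and C > 0 be real numbers. Then for all real w₁, w₄ ≥ 0 with w₁ + w₄ ≤ C, one has w₁^α + w₄^α − (w₁+w₄)^α ≥ 2·(C/2)^α − C^α. That is, over the region {w₁, w₄ ≥ 0, w₁ + w₄ ≤ C}, the expression w₁^α + w₄^α − (w₁+w₄)^α is minimized at w₁ = w₄ = C/2. -/
/-- Over the region `{w₁, w₄ ≥ 0, w₁ + w₄ ≤ C}`, the expression
`w₁^α + w₄^α − (w₁+w₄)^α` is minimized at `w₁ = w₄ = C/2`. -/
theorem superadditivity_gap_minimized_at_half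
    (α C : ℝ) (hα : 1 < α) (hC : 0 < C) :
    ∀ w₁ w₄ : ℝ, 0 ≤ w₁ → 0 ≤ w₄ → w₁ + w₄ ≤ C →
      w₁ ^ α + w₄ ^ α - (w₁ + w₄) ^ α ≥ 2 * (C / 2) ^ α - C ^ α := by
  intro w₁ w₄ h₁ h₄ hsum
  set s := w₁ + w₄ with hs
  have hs0 : 0 ≤ s := by positivity
  -- convexity : ((w₁+w₄)/2)^α ≤ (w₁^α + w₄^α)/2
  have hconv := ((convexOn_rpow hα.le)).2 (Set.mem_Ici.2 h₁) (Set.mem_Ici.2 h₄)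
    (by norm_num : (0:ℝ) ≤ 1/2) (by norm_num : (0:ℝ) ≤ 1/2) (by norm_num)
  simp only [smul_eq_mul] at hconv
  have key : 2 * (s/2) ^ α ≤ w₁ ^ α + w₄ ^ α := by
    have : (s/2 : ℝ) = 1/2 * w₁ + 1/2 * w₄ := by rw [hs]; ring
    rw [this]
    nlinarith [hconv]
  -- rewrite x^α with x = t/2 as t^α * (1/2)^α
  have hhalf : ∀ t : ℝ, 0 ≤ t → (t/2) ^ α = t ^ α * (1/2) ^ α := by
    intro t ht
    rw [div_eq_mul_one_div, Real.mul_rpow ht (by norm_num)]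
  have hk : 2 * ((1:ℝ)/2) ^ α - 1 < 0 := by
    have : ((1:ℝ)/2) ^ α < (1/2) ^ (1:ℝ) :=
      Real.rpow_lt_rpow_of_exponent_gt (by norm_num) (by norm_num) hα
    rw [Real.rpow_one] at this
    linarith
  have hsc : s ^ α ≤ C ^ α := Real.rpow_le_rpow hs0 hsum (by linarith)
  have hmono : s ^ α * (2 * ((1:ℝ)/2) ^ α - 1) ≥ C ^ α * (2 * ((1:ℝ)/2) ^ α - 1) :=
    mul_le_mul_of_nonpos_right hsc hk.le
  have e1 : 2 * (s/2) ^ α - s ^ α = s ^ α * (2 * ((1:ℝ)/2) ^ α - 1) := by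
    rw [hhalf s hs0]; ring
  have e2 : 2 * (C/2) ^ α - C ^ α = C ^ α * (2 * ((1:ℝ)/2) ^ α - 1) := by
    rw [hhalf C hC.le]; ring
  rw [e2]
  calc w₁ ^ α + w₄ ^ α - s ^ α ≥ 2 * (s/2) ^ α - s ^ α := by linarith
    _ = s ^ α * (2 * ((1:ℝ)/2) ^ α - 1) := e1
    _ ≥ C ^ α * (2 * ((1:ℝ)/2) ^ α - 1) := hmono
end

section
/- Let α > 1, μ > 0, C > 0 be real numbers and let σ be a real number with σ ≥ μ(α−1)·C^α. Then for all real w₁, w₄ ≥ 0 with w₁ + w₄ ≤ C, one has σ + μ·(w₁^α + w₄^α − (w₁+w₄)^α) ≥ μ·C^α·(α + 2^{1−α} − 2), and this lower bound is nonnegative. -/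
/-- Case 2 of the proof of Principle 1: the chain of inequalities
`σ + μ·(w₁^α + w₄^α − (w₁+w₄)^α) ≥ μ·C^α·(α + 2^{1−α} − 2) ≥ 0`. -/
theorem case2_chain
    (α μ C σ : ℝ) (hα : 1 < α) (hμ : 0 < μ) (hC : 0 < C)
    (hσ : σ ≥ μ * (α - 1) * C ^ α) :
    ∀ w₁ w₄ : ℝ, 0 ≤ w₁ → 0 ≤ w₄ → w₁ + w₄ ≤ C →
      σ + μ * (w₁ ^ α + w₄ ^ α - (w₁ + w₄) ^ α) ≥
          μ * C ^ α * (α + (2 : ℝ) ^ (1 - α) - 2) ∧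
        0 ≤ μ * C ^ α * (α + (2 : ℝ) ^ (1 - α) - 2) := by
  intro w₁ w₄ h₁ h₄ hle
  have hα0 : (0:ℝ) ≤ α := by linarith
  -- 2^(1-α) facts
  have h2pos : (0:ℝ) < (2:ℝ) ^ (1 - α) := Real.rpow_pos_of_pos (by norm_num) _
  have h2le1 : (2:ℝ) ^ (1 - α) ≤ 1 := by
    apply Real.rpow_le_one_of_one_le_of_nonpos (by norm_num) (by linarith)
  -- nonnegativity of the bound
  have hnn : 0 ≤ α + (2:ℝ) ^ (1 - α) - 2 := by
    have hexp : (2:ℝ) ^ (1 - α) = Real.exp ((1 - α) * Real.log 2) := by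
      rw [Real.rpow_def_of_pos (by norm_num)]; ring_nf
    have h1 : (1 - α) * Real.log 2 + 1 ≤ Real.exp ((1 - α) * Real.log 2) :=
      Real.add_one_le_exp _
    have hlog : Real.log 2 < 1 := by
      have := Real.log_two_lt_d9; linarith
    have hlogpos : 0 < Real.log 2 := Real.log_pos (by norm_num)
    nlinarith [hexp, h1]
  have hCα : (0:ℝ) < C ^ α := Real.rpow_pos_of_pos hC _
  constructor
  · -- power mean: (w₁+w₄)^α ≤ 2^(α-1) * (w₁^α + w₄^α)
    have hpm : (w₁ + w₄) ^ α ≤ (2:ℝ) ^ (α - 1) * (w₁ ^ α + w₄ ^ α) := by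
      have := NNReal.rpow_add_le_mul_rpow_add_rpow ⟨w₁, h₁⟩ ⟨w₄, h₄⟩ (le_of_lt hα)
      have := NNReal.coe_le_coe.mpr this
      push_cast at this
      exact this
    have hmul : (2:ℝ) ^ (1 - α) * ((2:ℝ) ^ (α - 1) * (w₁ ^ α + w₄ ^ α))
        = w₁ ^ α + w₄ ^ α := by
      rw [← mul_assoc, ← Real.rpow_add (by norm_num : (0:ℝ) < 2)]
      norm_num
    have hkey : (2:ℝ) ^ (1 - α) * (w₁ + w₄) ^ α ≤ w₁ ^ α + w₄ ^ α := by
      calc (2:ℝ) ^ (1 - α) * (w₁ + w₄) ^ α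
          ≤ (2:ℝ) ^ (1 - α) * ((2:ℝ) ^ (α - 1) * (w₁ ^ α + w₄ ^ α)) := by
            exact mul_le_mul_of_nonneg_left hpm (le_of_lt h2pos)
        _ = w₁ ^ α + w₄ ^ α := hmul
    have hsC : (w₁ + w₄) ^ α ≤ C ^ α :=
      Real.rpow_le_rpow (by linarith) hle hα0
    -- w₁^α + w₄^α - s^α ≥ (2^(1-α) - 1) * s^α ≥ (2^(1-α) - 1) * C^α
    have hstep : w₁ ^ α + w₄ ^ α - (w₁ + w₄) ^ α ≥ ((2:ℝ) ^ (1 - α) - 1) * C ^ α := by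
      nlinarith [hkey, hsC, h2le1]
    nlinarith [hσ, hstep, hμ, hCα]
  · positivity
end

section
/- (Principle 2 / Theorem 3.) Let α > 1 and μ > 0 be real numbers, and let k be a positive integer with (k : ℝ) ≥ 4^{α/(α−1)}. Then for all real u ≥ 0 and w ≥ 0, one has μ·(k·u + (k·(k−1)/2)·w)^α ≥ k·μ·(u + (k−1)·w)^α + (k/2)·μ·((k−1)·w)^α. That is, when each of k racks carries intra-rack traffic u and each ordered pair of distinct racks exchanges traffic w, the power of a single switch carrying all the traffic (load k·u + k(k−1)w/2) is at least the total load-dependent power of the k ToR switches (each with load u + (k−1)w) plus k/2 aggregation switches (each with load (k−1)w); hence distributing the VMs of a job into k racks consumes less load-dependent switch power than compacting them into a single rack. -/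
/-- Principle 2 (Theorem 3): with `k ≥ 4^{α/(α−1)}` racks, the load-dependent power of a
single switch carrying all the traffic is at least the total load-dependent power of the
`k` ToR switches plus `k/2` aggregation switches; hence distributing a job's VMs into `k`
racks consumes less power than compacting them into a single rack. -/
theorem principle2_distribute_into_racks
    (α μ : ℝ) (hα : 1 < α) (hμ : 0 < μ)
    (k : ℕ) (hk : 0 < k) (hkα : (k : ℝ) ≥ (4 : ℝ) ^ (α / (α - 1))) :
    ∀ u w : ℝ, 0 ≤ u → 0 ≤ w →
      μ * ((k : ℝ) * u + ((k : ℝ) * ((k : ℝ) - 1) / 2) * w) ^ α ≥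
        (k : ℝ) * μ * (u + ((k : ℝ) - 1) * w) ^ α +
          ((k : ℝ) / 2) * μ * (((k : ℝ) - 1) * w) ^ α := by
  intro u w hu hw
  have hα0 : (0:ℝ) < α := by linarith
  have hα1 : α - 1 ≠ 0 := by intro h; linarith [sub_eq_zero.mp h]
  have hk1 : (1:ℝ) ≤ (k:ℝ) := by exact_mod_cast hk
  have hk0 : (0:ℝ) < (k:ℝ) := by linarith
  set A : ℝ := u + ((k:ℝ) - 1) * w with hAdef
  set B : ℝ := ((k:ℝ) - 1) * w with hBdef
  set L : ℝ := (k:ℝ) * u + ((k:ℝ) * ((k:ℝ) - 1) / 2) * w with hLdef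
  have hB0 : 0 ≤ B := mul_nonneg (by linarith) hw
  have hA0 : 0 ≤ A := by rw [hAdef]; positivity
  have hBA : B ≤ A := by rw [hAdef, hBdef]; linarith
  have hLA : ((k:ℝ)/2) * A ≤ L := by
    have hL : L = (k:ℝ) * A - ((k:ℝ)/2) * B := by rw [hLdef, hAdef, hBdef]; ring
    nlinarith
  have hLB : ((k:ℝ)/2) * B ≤ L := by
    have hL : L = (k:ℝ) * A - ((k:ℝ)/2) * B := by rw [hLdef, hAdef, hBdef]; ring
    nlinarith
  have hL0 : 0 ≤ L := le_trans (by positivity) hLA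
  -- k^(α-1) ≥ 4^α
  have h4k : (4:ℝ) ^ α ≤ (k:ℝ) ^ (α - 1) := by
    have h := Real.rpow_le_rpow (Real.rpow_nonneg (by norm_num) _) hkα (by linarith : (0:ℝ) ≤ α - 1)
    rwa [← Real.rpow_mul (by norm_num : (0:ℝ) ≤ 4), div_mul_cancel₀ _ hα1] at h
  -- 2^(α+1) ≤ 4^α
  have h24 : (2:ℝ) ^ (α + 1) ≤ (4:ℝ) ^ α := by
    have h4 : (4:ℝ) ^ α = (2:ℝ) ^ (2 * α) := by
      rw [show (4:ℝ) = (2:ℝ) ^ (2:ℝ) by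
        rw [show (2:ℝ) = ((2:ℕ):ℝ) by norm_num, Real.rpow_natCast]; norm_num,
        ← Real.rpow_mul (by norm_num)]
    rw [h4]
    exact Real.rpow_le_rpow_of_exponent_le one_le_two (by linarith)
  -- key: (k/2)^α ≥ 2k
  have hkey : 2 * (k:ℝ) ≤ ((k:ℝ)/2) ^ α := by
    have hsplit : ((k:ℝ)/2) ^ α * (2:ℝ) ^ α = (k:ℝ) ^ α := by
      rw [← Real.mul_rpow (by positivity) (by norm_num), div_mul_cancel₀]
      norm_num
    have hka : (k:ℝ) ^ α = (k:ℝ) ^ (α - 1) * (k:ℝ) := by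
      rw [show α = (α - 1) + 1 by ring, Real.rpow_add hk0, Real.rpow_one]; norm_num
    have h2p : (2:ℝ) ^ (α + 1) = 2 * (2:ℝ) ^ α := by
      rw [Real.rpow_add (by norm_num), Real.rpow_one]; ring
    have h2pos : (0:ℝ) < (2:ℝ) ^ α := Real.rpow_pos_of_pos (by norm_num) _
    nlinarith [h4k, h24, hsplit, hka]
  have hAL : ((k:ℝ)/2) ^ α * A ^ α ≤ L ^ α := by
    rw [← Real.mul_rpow (by positivity) hA0]
    exact Real.rpow_le_rpow (by positivity) hLA hα0.le
  have hBL : ((k:ℝ)/2) ^ α * B ^ α ≤ L ^ α := by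
    rw [← Real.mul_rpow (by positivity) hB0]
    exact Real.rpow_le_rpow (by positivity) hLB hα0.le
  have hApow : (0:ℝ) ≤ A ^ α := Real.rpow_nonneg hA0 α
  have hBpow : (0:ℝ) ≤ B ^ α := Real.rpow_nonneg hB0 α
  have e1 : 2 * (k:ℝ) * A ^ α ≤ L ^ α :=
    le_trans (mul_le_mul_of_nonneg_right hkey hApow) hAL
  have e2 : 2 * (k:ℝ) * B ^ α ≤ L ^ α :=
    le_trans (mul_le_mul_of_nonneg_right hkey hBpow) hBL
  have e3 : (k:ℝ) * A ^ α + (k:ℝ) * B ^ α ≤ L ^ α := by linarith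
  nlinarith [mul_le_mul_of_nonneg_left e3 hμ.le, mul_nonneg (mul_nonneg hμ.le hk0.le) hBpow]
end

section
/- (Lemma 1.) Let α > 1, μ > 0, C > 0 be real numbers and let σ be a real number with σ ≥ μ(α−1)·C^α. Let n ≥ 1 be an integer and let p₁,…,pₙ and δ₁,…,δₙ be real numbers with 0 ≤ δᵢ ≤ pᵢ ≤ C for each i and Σᵢ δᵢ ≤ C. Then (n+1)·σ + μ·Σᵢ (pᵢ − δᵢ)^α + μ·(Σᵢ δᵢ)^α ≥ n·σ + μ·Σᵢ pᵢ^α. That is, serving the same total traffic with n+1 switches (loads pᵢ − δᵢ for i = 1,…,n and one extra switch with load Σᵢ δᵢ) never consumes less power than serving it with n switches (loads pᵢ); hence the optimal energy-efficient routing uses as few aggregation switches as possible. -/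
/-- Tangent-line bound: for `0 ≤ x ≤ y ≤ C` and `1 < α`,
`y^α - x^α ≤ α * C^(α-1) * (y - x)`. -/
lemma rpow_sub_rpow_le (α C : ℝ) (hα : 1 < α) {x y : ℝ} (hx : 0 ≤ x) (hxy : x ≤ y)
    (hyC : y ≤ C) : y ^ α - x ^ α ≤ α * C ^ (α - 1) * (y - x) := by
  have hy : 0 ≤ y := hx.trans hxy
  rcases eq_or_lt_of_le hy with h0 | h0
  · have hx0 : x = 0 := le_antisymm (hxy.trans h0.symm.le) hx
    simp [← h0, hx0]
  · have hs : (-1 : ℝ) ≤ x / y - 1 := by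
      have : 0 ≤ x / y := div_nonneg hx hy
      linarith
    have key := one_add_mul_self_le_rpow_one_add hs hα.le
    -- key : 1 + α * (x/y - 1) ≤ (1 + (x/y - 1)) ^ α
    have h1 : (1 : ℝ) + (x / y - 1) = x / y := by ring
    rw [h1] at key
    have hyα : (0:ℝ) < y ^ α := Real.rpow_pos_of_pos h0 α
    have hdiv : (x / y) ^ α = x ^ α / y ^ α := Real.div_rpow hx hy α
    -- multiply key by y^α
    have key2 : (1 + α * (x / y - 1)) * y ^ α ≤ x ^ α := by
      calc (1 + α * (x / y - 1)) * y ^ α ≤ (x / y) ^ α * y ^ α := by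
            exact mul_le_mul_of_nonneg_right key hyα.le
        _ = x ^ α := by rw [hdiv]; field_simp
    have hys : y ^ α = y ^ (α - 1) * y := by
      rw [← Real.rpow_add_one h0.ne' (α - 1)]; ring_nf
    have key3 : y ^ α - x ^ α ≤ α * y ^ (α - 1) * (y - x) := by
      have expand : (1 + α * (x / y - 1)) * y ^ α
          = y ^ α + α * (x / y - 1) * (y ^ (α - 1) * y) := by rw [← hys]; ring
      have hxy' : (x / y - 1) * y = x - y := by field_simp
      have h4 : α * (x / y - 1) * (y ^ (α - 1) * y) = α * y ^ (α - 1) * (x - y) := by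
        rw [show α * (x / y - 1) * (y ^ (α - 1) * y)
            = α * y ^ (α - 1) * ((x / y - 1) * y) by ring, hxy']
      linarith [key2, expand ▸ key2]
    have hpow : y ^ (α - 1) ≤ C ^ (α - 1) :=
      Real.rpow_le_rpow hy hyC (by linarith)
    have hmul := mul_le_mul_of_nonneg_right
      (mul_le_mul_of_nonneg_left hpow (by linarith : (0:ℝ) ≤ α)) (sub_nonneg.mpr hxy)
    linarith

open Finset in
/-- Lemma 1: serving the same total traffic with `n+1` switches (loads `pᵢ − δᵢ` and one
extra switch with load `Σᵢ δᵢ`) never consumes less power than serving it with `n`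
switches (loads `pᵢ`); hence the optimal energy-efficient routing uses as few aggregation
switches as possible. -/
theorem lemma1_fewer_switches_better
    (α μ C σ : ℝ) (hα : 1 < α) (hμ : 0 < μ) (hC : 0 < C)
    (hσ : σ ≥ μ * (α - 1) * C ^ α)
    (n : ℕ) (hn : 1 ≤ n) (p δ : Fin n → ℝ)
    (hδ0 : ∀ i, 0 ≤ δ i) (hδp : ∀ i, δ i ≤ p i) (hpC : ∀ i, p i ≤ C)
    (hδsum : ∑ i, δ i ≤ C) :
    ((n : ℝ) + 1) * σ + μ * ∑ i, (p i - δ i) ^ α + μ * (∑ i, δ i) ^ α ≥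
      (n : ℝ) * σ + μ * ∑ i, (p i) ^ α := by
  set S := ∑ i, δ i with hS
  have hS0 : 0 ≤ S := Finset.sum_nonneg fun i _ => hδ0 i
  -- pointwise bound
  have hpt : ∀ i, (p i) ^ α - (p i - δ i) ^ α ≤ α * C ^ (α - 1) * δ i := by
    intro i
    have h := rpow_sub_rpow_le α C hα (x := p i - δ i) (y := p i)
      (by linarith [hδp i, hδ0 i]) (by linarith [hδ0 i]) (hpC i)
    simpa using h
  have hsum : ∑ i, ((p i) ^ α - (p i - δ i) ^ α) ≤ α * C ^ (α - 1) * S := by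
    rw [hS, Finset.mul_sum]
    exact Finset.sum_le_sum fun i _ => hpt i
  have hsum' : ∑ i, (p i) ^ α - ∑ i, (p i - δ i) ^ α ≤ α * C ^ (α - 1) * S := by
    rw [← Finset.sum_sub_distrib]; exact hsum
  -- Young's inequality: C^(α-1) * S ≤ C^α * (α-1)/α + S^α / α
  have hconj : (α / (α - 1)).HolderConjugate α := by
    rw [Real.holderConjugate_iff]; constructor
    · rw [lt_div_iff₀ (by linarith)]; linarith
    · field_simp; ring
  have hyoung := Real.young_inequality_of_nonneg
    (Real.rpow_nonneg hC.le (α - 1)) hS0 hconj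
  have hCa : (C ^ (α - 1)) ^ (α / (α - 1)) = C ^ α := by
    rw [← Real.rpow_mul hC.le]
    congr 1
    have : α - 1 ≠ 0 := by intro h; nlinarith [h]
    field_simp
  rw [hCa] at hyoung
  have hα0 : (0:ℝ) < α := by linarith
  have hα1 : α - 1 ≠ 0 := by intro h; linarith [sub_eq_zero.mp h]
  have hy2 : α * C ^ (α - 1) * S ≤ (α - 1) * C ^ α + S ^ α := by
    have := mul_le_mul_of_nonneg_left hyoung hα0.le
    have heq : α * (C ^ α / (α / (α - 1)) + S ^ α / α) = (α - 1) * C ^ α + S ^ α := by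
      field_simp
    nlinarith [this, heq]
  have hfinal : μ * (∑ i, (p i) ^ α - ∑ i, (p i - δ i) ^ α) ≤ σ + μ * S ^ α := by
    have h1 : μ * (∑ i, (p i) ^ α - ∑ i, (p i - δ i) ^ α) ≤ μ * (α * C ^ (α - 1) * S) :=
      mul_le_mul_of_nonneg_left hsum' hμ.le
    have h2 : μ * (α * C ^ (α - 1) * S) ≤ μ * ((α - 1) * C ^ α + S ^ α) :=
      mul_le_mul_of_nonneg_left hy2 hμ.le
    nlinarith [h1, h2]
  nlinarith [hfinal]
end

section
/- Let α > 1 and C > 0 be real numbers and let n ≥ 1 be an integer. Then for all real numbers δ₁,…,δₙ with 0 ≤ δᵢ ≤ C for each i, one has Σᵢ (C − δᵢ)^α + (Σᵢ δᵢ)^α ≥ (n+1)·(n·C/(n+1))^α. That is, over the box [0,C]ⁿ the left-hand side is minimized at δ₁ = ⋯ = δₙ = C/(n+1). -/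
open Finset in
/-- Jensen-type bound: over the box `[0,C]ⁿ` the quantity
`Σᵢ (C − δᵢ)^α + (Σᵢ δᵢ)^α` is minimized at `δ₁ = ⋯ = δₙ = C/(n+1)`. -/
theorem jensen_box_bound
    (α C : ℝ) (hα : 1 < α) (hC : 0 < C)
    (n : ℕ) (hn : 1 ≤ n) (δ : Fin n → ℝ)
    (hδ0 : ∀ i, 0 ≤ δ i) (hδC : ∀ i, δ i ≤ C) :
    ∑ i, (C - δ i) ^ α + (∑ i, δ i) ^ α ≥
      ((n : ℝ) + 1) * ((n : ℝ) * C / ((n : ℝ) + 1)) ^ α := by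
  set g : Fin (n + 1) → ℝ := Fin.snoc (fun i => C - δ i) (∑ i, δ i) with hg
  have hpos : (0 : ℝ) < (n : ℝ) + 1 := by positivity
  have hw : ∑ _i : Fin (n + 1), ((n : ℝ) + 1)⁻¹ = 1 := by
    simp [Finset.card_univ, mul_comm]
    field_simp
  have hgsum : ∑ i : Fin (n + 1), g i = (n : ℝ) * C := by
    rw [hg, Fin.sum_univ_castSucc]
    simp [Fin.snoc_castSucc, Fin.snoc_last, Finset.sum_sub_distrib, mul_comm]
  have hgmem : ∀ i ∈ Finset.univ, g i ∈ Set.Ici (0 : ℝ) := by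
    intro i _
    refine Fin.lastCases ?_ ?_ i
    · simpa [hg] using Finset.sum_nonneg fun i _ => hδ0 i
    · intro j; simpa [hg] using sub_nonneg.mpr (hδC j)
  have key := (convexOn_rpow hα.le).map_sum_le
    (w := fun _ : Fin (n + 1) => ((n : ℝ) + 1)⁻¹)
    (p := g) (fun i _ => by positivity) hw hgmem
  have hc : ∑ i : Fin (n + 1), ((n : ℝ) + 1)⁻¹ • g i = (n : ℝ) * C / ((n : ℝ) + 1) := by
    rw [← Finset.smul_sum, hgsum, smul_eq_mul, div_eq_inv_mul]
  simp only [smul_eq_mul] at key hc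
  rw [hc, ← Finset.mul_sum] at key
  have key2 : ((n : ℝ) + 1) * ((n : ℝ) * C / ((n : ℝ) + 1)) ^ α ≤
      ∑ i : Fin (n + 1), g i ^ α := by
    exact (le_inv_mul_iff₀ hpos).mp key
  have hsplit : ∑ i : Fin (n + 1), g i ^ α = ∑ i, (C - δ i) ^ α + (∑ i, δ i) ^ α := by
    rw [Fin.sum_univ_castSucc]
    simp [hg, Fin.snoc_castSucc, Fin.snoc_last]
  rw [hsplit] at key2
  exact key2
end
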